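/- Let d, T be positive integers, λ > 0, and x_1, …, x_T ∈ ℝ^d. With V_0 = λ I_d and V_t = λ I_d + ∑_{s=1}^t x_s x_sᵀ, one has det(V_T) = λ^d · ∏_{t=1}^T (1 + ‖x_t‖²_{V_{t-1}^{-1}}). -/

import Mathlib

open Matrix Finset

/-- `‖z‖_W := √(zᵀ W z)` for a `d × d` real matrix `W`. -/
noncomputable def matNorm {d : ℕ} (W : Matrix (Fin d) (Fin d) ℝ) (z : Fin d → ℝ) : ℝ :=
  Real.sqrt (z ⬝ᵥ (W *ᵥ z))

lemma vecMulVec_posSemidef {d : ℕ} (u : Fin d → ℝ) :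
    (vecMulVec u u).PosSemidef := by
  refine Matrix.PosSemidef.of_dotProduct_mulVec_nonneg ?_ ?_
  · ext i j
    simp [Matrix.conjTranspose_apply, Matrix.vecMulVec_apply, mul_comm]
  · intro z
    have : vecMulVec u u *ᵥ z = (u ⬝ᵥ z) • u := by
      ext i
      simp [Matrix.mulVec, Matrix.vecMulVec_apply, dotProduct, Finset.mul_sum, mul_comm,
        mul_left_comm, mul_assoc]
    rw [this]
    simp only [star_trivial, dotProduct_smul, smul_eq_mul, RCLike.star_def]
    have : z ⬝ᵥ u = u ⬝ᵥ z := dotProduct_comm _ _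
    rw [this]
    exact mul_self_nonneg _

lemma smul_one_posDef {d : ℕ} {lam : ℝ} (hlam : 0 < lam) :
    (lam • (1 : Matrix (Fin d) (Fin d) ℝ)).PosDef := by
  rw [Matrix.smul_one_eq_diagonal]
  exact Matrix.posDef_diagonal_iff.mpr fun _ => hlam

lemma V_posDef {d : ℕ} {lam : ℝ} (hlam : 0 < lam) (x : ℕ → Fin d → ℝ) (t : ℕ) :
    (lam • (1 : Matrix (Fin d) (Fin d) ℝ) +
      ∑ s ∈ Finset.Icc 1 t, vecMulVec (x s) (x s)).PosDef := by
  refine (smul_one_posDef hlam).add_posSemidef ?_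
  refine Finset.sum_induction _ _ (fun a b ha hb => ha.add hb) ?_ ?_
  · exact Matrix.PosSemidef.zero
  · exact fun s _ => vecMulVec_posSemidef (x s)

lemma det_add_vecMulVec {d : ℕ} (A : Matrix (Fin d) (Fin d) ℝ) (u v : Fin d → ℝ)
    (hA : IsUnit A.det) :
    (A + vecMulVec u v).det = A.det * (1 + v ⬝ᵥ (A⁻¹ *ᵥ u)) := by
  rw [vecMulVec_eq (Fin 1), Matrix.det_add_replicateCol_mul_replicateRow hA]
  congr 1
  rw [@Matrix.det_unique _ _ _ _ (fun a b => decidableEq_of_subsingleton a b) _]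
  simp only [Matrix.add_apply, Matrix.one_apply_eq, Matrix.mul_apply, Matrix.replicateRow_apply,
    Matrix.replicateCol_apply, dotProduct, Matrix.mulVec, Finset.mul_sum, Finset.sum_mul, mul_assoc]
  congr 1
  rw [Finset.sum_comm]

/-- with `V_0 = λ I` and `V_t = λ I + ∑_{s=1}^t x_s x_sᵀ`,
`det(V_T) = λ^d · ∏_{t=1}^T (1 + ‖x_t‖²_{V_{t-1}⁻¹})`. -/
theorem det_product_formula (d T : ℕ) (hd : 0 < d) (hT : 0 < T)
    (lam : ℝ) (hlam : 0 < lam) (x : ℕ → Fin d → ℝ)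
    (V : ℕ → Matrix (Fin d) (Fin d) ℝ)
    (hV : ∀ t, V t = lam • (1 : Matrix (Fin d) (Fin d) ℝ) +
      ∑ s ∈ Finset.Icc 1 t, vecMulVec (x s) (x s)) :
    (V T).det = lam ^ d * ∏ t ∈ Finset.Icc 1 T, (1 + (matNorm ((V (t - 1))⁻¹) (x t)) ^ 2) := by
  have hpd : ∀ t, (V t).PosDef := fun t => by rw [hV t]; exact V_posDef hlam x t
  induction T with
  | zero =>
    simp [hV 0, Matrix.det_smul]
  | succ n ih =>
    have hstep : V (n + 1) = V n + vecMulVec (x (n + 1)) (x (n + 1)) := by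
      rw [hV (n + 1), hV n, Finset.sum_Icc_succ_top (Nat.one_le_iff_ne_zero.mpr (Nat.succ_ne_zero n)),
        add_assoc]
    have hunit : IsUnit (V n).det := (hpd n).det_pos.ne'.isUnit
    have hdet : (V (n + 1)).det = (V n).det * (1 + x (n + 1) ⬝ᵥ ((V n)⁻¹ *ᵥ x (n + 1))) := by
      rw [hstep, det_add_vecMulVec _ _ _ hunit]
    have hnorm : (matNorm ((V n)⁻¹) (x (n + 1))) ^ 2
        = x (n + 1) ⬝ᵥ ((V n)⁻¹ *ᵥ x (n + 1)) := by
      rw [matNorm, Real.sq_sqrt]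
      have := ((hpd n).inv).posSemidef.dotProduct_mulVec_nonneg (x (n + 1))
      simpa using this
    rw [Finset.prod_Icc_succ_top (Nat.one_le_iff_ne_zero.mpr (Nat.succ_ne_zero n))]
    by_cases hn : n = 0
    · subst hn
      rw [Finset.Icc_eq_empty (by norm_num), Finset.prod_empty]
      rw [hdet]
      simp only [Nat.add_sub_cancel, hnorm]
      rw [hV 0]
      simp [Matrix.det_smul, mul_assoc]
    · have ihn := ih (Nat.pos_of_ne_zero hn)
      rw [hdet, ihn]
      simp only [Nat.add_sub_cancel, hnorm]
      ring
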